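/- Let G be a connected simple graph, let m ≥ 1, and let g be an IC-coloring of G. Then there exists an IC-coloring f of the join O_m ∨ G such that f(O_m ∨ G) = 2^m · g(G) + 1. -/

import Mathlib

/-- The join `H₀ ∨ H₁` of two graphs: all edges of `H₀`, all edges of `H₁`, and all
pairs with one endpoint in each. -/
def graphJoin {α β : Type*} (G : SimpleGraph α) (H : SimpleGraph β) :
    SimpleGraph (α ⊕ β) where
  Adj x y :=
    match x, y with
    | Sum.inl a, Sum.inl b => G.Adj a b
    | Sum.inr a, Sum.inr b => H.Adj a b
    | Sum.inl _, Sum.inr _ => True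
    | Sum.inr _, Sum.inl _ => True
  symm := by
    constructor
    rintro (a | a) (b | b) h
    · exact G.symm.symm _ _ h
    · trivial
    · trivial
    · exact H.symm.symm _ _ h
  loopless := by
    constructor
    rintro (a | a) h
    · exact G.loopless.irrefl a h
    · exact H.loopless.irrefl a h

/-- A coloring `f : V(G) → ℕ` (positive-valued) is an IC-coloring if every integer
`k` with `1 ≤ k ≤ f(G)` is the `f`-sum of some nonempty vertex subset inducing a
connected subgraph. -/
def IsICColoring {α : Type*} [Fintype α] (G : SimpleGraph α) (f : α → ℕ) : Prop :=
  (∀ v, 0 < f v) ∧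
    ∀ k : ℕ, 1 ≤ k → k ≤ ∑ v, f v →
      ∃ S : Finset α, S.Nonempty ∧ (G.induce (S : Set α)).Connected ∧
        ∑ v ∈ S, f v = k

/-- The IC-index `M(G)`: the maximum of `f(G)` over all IC-colorings `f` of `G`. -/
noncomputable def ICIndex {α : Type*} [Fintype α] (G : SimpleGraph α) : ℕ :=
  sSup {t | ∃ f : α → ℕ, IsICColoring G f ∧ ∑ v, f v = t}

/-- `K_{1(n),m} = O_m ∨ K_n`: the complete `(n+1)`-partite graph with `n` parts of
size one and one part (`V₀ = Fin m`, the left summand) of size `m`. -/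
def K1nm (m n : ℕ) : SimpleGraph (Fin m ⊕ Fin n) :=
  graphJoin (⊥ : SimpleGraph (Fin m)) (⊤ : SimpleGraph (Fin n))



section helpers

lemma bits_sum (m : ℕ) : ∀ j < 2^m, ∑ i ∈ Finset.range m, (j.testBit i).toNat * 2^i = j := by
  induction m with
  | zero => intro j hj; interval_cases j; simp
  | succ m ih =>
    intro j hj
    rw [Finset.sum_range_succ]
    have h1 : ∀ i ∈ Finset.range m, (j.testBit i).toNat * 2^i = ((j % 2^m).testBit i).toNat * 2^i := by
      intro i hi
      rw [Nat.testBit_mod_two_pow]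
      simp [Finset.mem_range.mp hi]
    rw [Finset.sum_congr rfl h1, ih _ (Nat.mod_lt _ (by positivity))]
    have h2 : j / 2^m ≤ 1 := by
      rw [Nat.div_le_iff_le_mul_add_pred (by positivity)]
      omega
    have h3 : (j.testBit m).toNat = j / 2^m := by
      rw [Nat.testBit_eq_decide_div_mod_eq]
      rcases Nat.le_one_iff_eq_zero_or_eq_one.mp h2 with h | h <;> simp [h]
    rw [h3, mul_comm]
    exact Nat.mod_add_div j (2^m)

lemma testBit_top (m j : ℕ) (hm : 1 ≤ m) (hj : j < 2^m) :
    j.testBit (m-1) = true ↔ 2^(m-1) ≤ j := by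
  have hpos : 0 < 2^(m-1) := by positivity
  have h2m : 2^m = 2^(m-1) * 2 := by
    rw [← pow_succ]
    congr 1
    omega
  have h1 := Nat.div_add_mod j (2^(m-1))
  have h2 : j % 2^(m-1) < 2^(m-1) := Nat.mod_lt _ hpos
  have hq : j / 2^(m-1) < 2 := by
    rw [Nat.div_lt_iff_lt_mul hpos]
    omega
  rw [Nat.testBit_eq_decide_div_mod_eq]
  interval_cases h : j / 2^(m-1) <;> simp <;> omega

lemma fin_ite_sum (m : ℕ) (hm : 1 ≤ m) (A : Finset (Fin m)) :
    ∑ i ∈ A, (if (i:ℕ) = m - 1 then 1 else 0) =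
      (if (⟨m-1, by omega⟩ : Fin m) ∈ A then 1 else 0) := by
  rw [← Finset.sum_ite_eq' A (⟨m-1, by omega⟩ : Fin m) (fun _ => 1)]
  apply Finset.sum_congr rfl
  intro i _
  congr 1
  simp [Fin.ext_iff]

end helpers

lemma graphJoin_adj_lr {α β : Type*} (G : SimpleGraph α) (H : SimpleGraph β)
    (a : α) (b : β) : (graphJoin G H).Adj (Sum.inl a) (Sum.inr b) := trivial

lemma graphJoin_adj_rr {α β : Type*} (G : SimpleGraph α) (H : SimpleGraph β)
    {a b : β} : (graphJoin G H).Adj (Sum.inr a) (Sum.inr b) ↔ H.Adj a b := Iff.rfl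

-- L1 : pure right part
lemma joinL1 {α β : Type*} (G : SimpleGraph α) (H : SimpleGraph β) (B : Set β)
    (hB : (H.induce B).Connected) :
    ((graphJoin G H).induce (Sum.inr '' B)).Connected := by
  have e : H.induce B ≃g (graphJoin G H).induce (Sum.inr '' B) := by
    refine ⟨Equiv.Set.image Sum.inr B Sum.inr_injective, ?_⟩
    rintro ⟨a, ha⟩ ⟨b, hb⟩
    rfl
  exact (SimpleGraph.Iso.connected_iff e).mp hB

-- L3 : singleton
lemma induce_singleton_connected {V : Type*} (G : SimpleGraph V) (x : V) :
    (G.induce {x}).Connected := by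
  rw [SimpleGraph.connected_iff]
  constructor
  · rintro ⟨a, ha⟩ ⟨b, hb⟩
    simp only [Set.mem_singleton_iff] at ha hb
    subst ha; subst hb
    rfl
  · exact ⟨⟨x, rfl⟩⟩

-- L2 : mixed
lemma joinL2 {α β : Type*} (G : SimpleGraph α) (H : SimpleGraph β)
    (A : Set α) (B : Set β) (hA : A.Nonempty) (hB : B.Nonempty) :
    ((graphJoin G H).induce (Sum.inl '' A ∪ Sum.inr '' B)).Connected := by
  obtain ⟨a0, ha0⟩ := hA
  obtain ⟨b0, hb0⟩ := hB
  set s : Set (α ⊕ β) := Sum.inl '' A ∪ Sum.inr '' B with hs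
  have hina : ∀ a ∈ A, Sum.inl a ∈ s := fun a ha => Or.inl ⟨a, ha, rfl⟩
  have hinb : ∀ b ∈ B, Sum.inr b ∈ s := fun b hb => Or.inr ⟨b, hb, rfl⟩
  rw [SimpleGraph.connected_iff]
  refine ⟨?_, ⟨⟨Sum.inr b0, hinb _ hb0⟩⟩⟩
  have key : ∀ x : s, ((graphJoin G H).induce s).Reachable x ⟨Sum.inr b0, hinb _ hb0⟩ := by
    rintro ⟨(a | b), hx⟩
    · exact SimpleGraph.Adj.reachable (by trivial)
    · have h1 : ((graphJoin G H).induce s).Adj ⟨Sum.inr b, hx⟩ ⟨Sum.inl a0, hina _ ha0⟩ := by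
        trivial
      have h2 : ((graphJoin G H).induce s).Adj ⟨Sum.inl a0, hina _ ha0⟩ ⟨Sum.inr b0, hinb _ hb0⟩ := by
        trivial
      exact h1.reachable.trans h2.reachable
  intro x y
  exact (key x).trans (key y).symm

/-- If `g` is an IC-coloring of a connected graph `G` and `m ≥ 1`,
then there is an IC-coloring `f` of `O_m ∨ G` with `f(O_m ∨ G) = 2^m · g(G) + 1`. -/
theorem stmt_6 {α : Type*} [Fintype α] (G : SimpleGraph α) (hG : G.Connected)
    (m : ℕ) (hm : 1 ≤ m) (g : α → ℕ) (hg : IsICColoring G g) :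
    ∃ f : Fin m ⊕ α → ℕ,
      IsICColoring (graphJoin (⊥ : SimpleGraph (Fin m)) G) f ∧
        ∑ v, f v = 2 ^ m * (∑ v, g v) + 1 := by
  classical
  obtain ⟨hgpos, hgcov⟩ := hg
  set N := ∑ v, g v with hN
  have hα : Nonempty α := hG.nonempty
  have hN1 : 1 ≤ N := by
    obtain ⟨a⟩ := hα
    exact le_trans (hgpos a) (Finset.single_le_sum (fun v _ => Nat.zero_le _) (Finset.mem_univ a))
  set f : Fin m ⊕ α → ℕ :=
    Sum.elim (fun i : Fin m => 2^(i:ℕ) * N + if (i:ℕ) = m - 1 then 1 else 0) g with hf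
  -- total sum
  have hgeo : ∑ i : Fin m, 2^(i:ℕ) = 2^m - 1 := by
    rw [Fin.sum_univ_eq_sum_range (fun i => 2^i) m, Nat.geomSum_eq le_rfl m]
    simp
  have h2m1 : (1:ℕ) ≤ 2^m := Nat.one_le_two_pow
  have hNle : N ≤ 2^m * N := Nat.le_mul_of_pos_left N (by omega)
  have hsumf : ∑ v, f v = 2^m * N + 1 := by
    rw [Fintype.sum_sum_type]
    simp only [hf, Sum.elim_inl, Sum.elim_inr]
    rw [Finset.sum_add_distrib, ← Finset.sum_mul, hgeo,
      fin_ite_sum m hm Finset.univ, if_pos (Finset.mem_univ _), Nat.sub_one_mul]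
    omega
  -- mixed witnesses
  have hmixed : ∀ j b : ℕ, 1 ≤ j → j < 2^m → 1 ≤ b → b ≤ N →
      ∃ S : Finset (Fin m ⊕ α), S.Nonempty ∧
        ((graphJoin (⊥ : SimpleGraph (Fin m)) G).induce (S : Set (Fin m ⊕ α))).Connected ∧
        ∑ v ∈ S, f v = j * N + (if 2^(m-1) ≤ j then 1 else 0) + b := by
    intro j b hj1 hj2 hb1 hb2
    set A : Finset (Fin m) := Finset.univ.filter (fun i => j.testBit (i:ℕ)) with hA
    have hAsum : ∑ i ∈ A, 2^(i:ℕ) = j := by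
      rw [hA, Finset.sum_filter, Fin.sum_univ_eq_sum_range (fun i => if j.testBit i then 2^i else 0) m]
      have heq : ∀ i ∈ Finset.range m, (if j.testBit i then 2^i else 0) = (j.testBit i).toNat * 2^i := by
        intro i _
        cases h : j.testBit i <;> simp [h]
      rw [Finset.sum_congr rfl heq]
      exact bits_sum m j hj2
    have hAne : A.Nonempty := by
      apply Finset.nonempty_of_sum_ne_zero (f := fun i : Fin m => 2^(i:ℕ))
      omega
    have hAtop : ((⟨m-1, by omega⟩ : Fin m) ∈ A) ↔ 2^(m-1) ≤ j := by
      rw [hA, Finset.mem_filter]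
      simp only [Finset.mem_univ, true_and]
      exact (testBit_top m j hm hj2)
    obtain ⟨B, hBne, hBconn, hBsum⟩ := hgcov b hb1 hb2
    refine ⟨A.image Sum.inl ∪ B.image Sum.inr, ?_, ?_, ?_⟩
    · exact Finset.Nonempty.mono Finset.subset_union_left (hAne.image _)
    · have : ((A.image Sum.inl ∪ B.image Sum.inr : Finset (Fin m ⊕ α)) : Set (Fin m ⊕ α))
          = Sum.inl '' ↑A ∪ Sum.inr '' ↑B := by
        simp [Finset.coe_union, Finset.coe_image]
      rw [this]
      exact joinL2 (⊥ : SimpleGraph (Fin m)) G (A : Set (Fin m)) (B : Set α) (Finset.coe_nonempty.mpr hAne) (Finset.coe_nonempty.mpr hBne)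
    · rw [Finset.sum_union (by
        rw [Finset.disjoint_left]
        rintro x hx hy
        simp only [Finset.mem_image] at hx hy
        obtain ⟨_, _, rfl⟩ := hx
        obtain ⟨_, _, h⟩ := hy
        cases h)]
      rw [Finset.sum_image (fun _ _ _ _ h => Sum.inl_injective h),
        Finset.sum_image (fun _ _ _ _ h => Sum.inr_injective h)]
      simp only [hf, Sum.elim_inl, Sum.elim_inr]
      rw [Finset.sum_add_distrib, ← Finset.sum_mul, hAsum, hBsum,
        fin_ite_sum m hm A]
      congr 2
      simp [hAtop]
  refine ⟨f, ⟨?_, ?_⟩, by rw [hsumf]⟩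
  · rintro (i | a)
    · simp only [hf, Sum.elim_inl]
      have : 0 < 2^(i:ℕ) * N := Nat.mul_pos (by positivity) (by omega)
      omega
    · exact hgpos a
  · intro k hk1 hk2
    rw [hsumf] at hk2
    have hXN : N ≤ 2^(m-1) * N := Nat.le_mul_of_pos_left N (by positivity)
    have hXX : 2^(m-1) * N ≤ 2^m * N :=
      Nat.mul_le_mul_right N (Nat.pow_le_pow_right (by norm_num) (by omega))
    have hNpos : 0 < N := hN1
    rcases (by omega : k ≤ N ∨ k = 2^(m-1)*N + 1 ∨ (N < k ∧ k ≤ 2^(m-1)*N) ∨ 2^(m-1)*N + 2 ≤ k)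
      with hc | hc | ⟨hc1, hc2⟩ | hc
    · -- pure right part
      obtain ⟨B, hBne, hBconn, hBsum⟩ := hgcov k hk1 hc
      refine ⟨B.image Sum.inr, hBne.image _, ?_, ?_⟩
      · have : ((B.image Sum.inr : Finset (Fin m ⊕ α)) : Set (Fin m ⊕ α)) = Sum.inr '' ↑B := by
          simp [Finset.coe_image]
        rw [this]
        exact joinL1 _ G (↑B) hBconn
      · rw [Finset.sum_image (fun _ _ _ _ h => Sum.inr_injective h)]
        simpa [hf] using hBsum
    · -- singleton top vertex
      refine ⟨{Sum.inl ⟨m-1, by omega⟩}, Finset.singleton_nonempty _, ?_, ?_⟩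
      · have : (({Sum.inl ⟨m-1, by omega⟩} : Finset (Fin m ⊕ α)) : Set (Fin m ⊕ α))
            = {Sum.inl ⟨m-1, by omega⟩} := by simp
        rw [this]
        exact induce_singleton_connected _ _
      · rw [Finset.sum_singleton]
        simp only [hf, Sum.elim_inl]
        simp only [if_true]
        omega
    · -- middle range
      have hmod := Nat.div_add_mod (k-1) N
      have hmlt : (k-1) % N < N := Nat.mod_lt _ hNpos
      have hj1 : 1 ≤ (k-1)/N := (Nat.le_div_iff_mul_le hNpos).mpr (by omega)
      have hjlt : (k-1)/N < 2^(m-1) := (Nat.div_lt_iff_lt_mul hNpos).mpr (by omega)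
      obtain ⟨S, hSne, hSconn, hSsum⟩ := hmixed ((k-1)/N) (k - N*((k-1)/N)) hj1
        (lt_of_lt_of_le hjlt (Nat.pow_le_pow_right (by norm_num) (by omega)))
        (by omega) (by omega)
      refine ⟨S, hSne, hSconn, ?_⟩
      rw [hSsum, if_neg (by omega), mul_comm]
      omega
    · -- top range
      have h2m1' : (1:ℕ) ≤ 2^(m-1) := Nat.one_le_two_pow
      have hmod := Nat.div_add_mod (k-2) N
      have hmlt : (k-2) % N < N := Nat.mod_lt _ hNpos
      have hjtop : 2^(m-1) ≤ (k-2)/N := (Nat.le_div_iff_mul_le hNpos).mpr (by omega)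
      have hjlt : (k-2)/N < 2^m := (Nat.div_lt_iff_lt_mul hNpos).mpr (by omega)
      obtain ⟨S, hSne, hSconn, hSsum⟩ := hmixed ((k-2)/N) (k - 1 - N*((k-2)/N))
        (by omega) hjlt (by omega) (by omega)
      refine ⟨S, hSne, hSconn, ?_⟩
      rw [hSsum, if_pos hjtop, mul_comm]
      omega
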